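/- Let G be a hole-free graph (no induced cycle on 5 or more vertices) admitting a partition (V1, V2) of its vertices whose crossing edges form a perfect matching M. If F ⊆ V1 induces a 2-connected subgraph of G with at least 3 vertices, then the set of M-partners of vertices of F induces a cluster graph (a disjoint union of cliques, i.e., a P_3-free graph) in G. -/

import Mathlib

open SimpleGraph

/-- A graph is 2-connected: it is connected, has at least 3 vertices, and removing
any single vertex leaves it connected. -/
def TwoConnected {W : Type*} (H : SimpleGraph W) : Prop :=
  H.Connected ∧ 3 ≤ Nat.card W ∧ ∀ w : W, (H.induce {w}ᶜ).Connected

lemma my_walk_prefix {V : Type*} {G : SimpleGraph V} {u v : V} (p : G.Walk u v) (i : ℕ) :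
    ∃ q : G.Walk u (p.getVert i), q.length ≤ i := by
  induction p generalizing i with
  | nil => exact ⟨Walk.nil, by simp⟩
  | @cons a b c h p ih =>
    cases i with
    | zero => exact ⟨Walk.nil, Nat.le_of_eq rfl⟩
    | succ n =>
      obtain ⟨q, hq⟩ := ih n
      exact ⟨Walk.cons h q, by simpa using hq⟩

lemma my_walk_suffix {V : Type*} {G : SimpleGraph V} {u v : V} (p : G.Walk u v) (i : ℕ) :
    ∃ q : G.Walk (p.getVert i) v, q.length ≤ p.length - i := by
  induction p generalizing i with
  | nil => exact ⟨Walk.nil, by simp⟩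
  | @cons a b c h p ih =>
    cases i with
    | zero => exact ⟨Walk.cons h p, Nat.le_of_eq rfl⟩
    | succ n =>
      obtain ⟨q, hq⟩ := ih n
      exact ⟨q, le_trans hq (by simp)⟩

lemma my_cycle_embed {V : Type*} (G : SimpleGraph V) (N : ℕ) (hN : 5 ≤ N) (g : ℕ → V)
    (h2 : ∀ i j : ℕ, i < j → j < N → (G.Adj (g i) (g j) ↔ (j = i + 1 ∨ (i = 0 ∧ j = N - 1))))
    (h3 : ∀ i j : ℕ, i < j → j < N → g i ≠ g j) :
    Nonempty (cycleGraph N ↪g G) := by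
  have key : ∀ u v : Fin N, u.val < v.val →
      (((u - v).val = 1 ∨ (v - u).val = 1) ↔ (v.val = u.val + 1 ∨ (u.val = 0 ∧ v.val = N - 1))) := by
    intro u v huv
    have hv := v.isLt
    have hu := u.isLt
    have h1 : (v - u).val = v.val - u.val := by
      rw [Fin.sub_def]
      simp only
      have he : N - u.val + v.val = (v.val - u.val) + N := by omega
      rw [he, Nat.add_mod_right, Nat.mod_eq_of_lt (by omega)]
    have hsd : (u - v).val = (N - v.val + u.val) % N := by rw [Fin.sub_def]
    have h2' : (u - v).val = N - v.val + u.val := by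
      rw [hsd, Nat.mod_eq_of_lt (by omega)]
    rw [h1, h2']
    omega
  refine ⟨⟨⟨fun i => g i.val, ?_⟩, ?_⟩⟩
  · intro i j hij
    rcases lt_trichotomy i.val j.val with h | h | h
    · exact absurd hij (h3 _ _ h j.isLt)
    · exact Fin.ext h
    · exact absurd hij.symm (h3 _ _ h i.isLt)
  · intro i j
    show G.Adj (g i.val) (g j.val) ↔ (cycleGraph N).Adj i j
    rw [cycleGraph_adj']
    rcases lt_trichotomy i.val j.val with h | h | h
    · exact (h2 i.val j.val h j.isLt).trans (key i j h).symm
    · have hii : i = j := Fin.ext h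
      subst hii
      have h0 : ((i - i : Fin N)).val = 0 := by
        rw [Fin.sub_def]
        simp only
        rw [Nat.sub_add_cancel (le_of_lt i.isLt), Nat.mod_self]
      simp [h0]
    · exact (((G.adj_comm _ _).trans ((h2 j.val i.val h i.isLt).trans (key j i h).symm)).trans or_comm)


/-- Hole-free graphs with a perfect matching cut `(V1, V1ᶜ)` (the matching given by the
partner function `m`): if `F ⊆ V1` induces a 2-connected subgraph with at least 3
vertices, then the set of `M`-partners of `F` induces a cluster (`P₃`-free) graph. -/
theorem holeFree_pmcut_partner_set_cluster {V : Type*} (G : SimpleGraph V)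
    (hhole : ∀ k : ℕ, 5 ≤ k → IsEmpty (cycleGraph k ↪g G))
    (V1 : Set V) (m : V → V)
    (hm : ∀ v : V, G.Adj v (m v) ∧ (v ∈ V1 ↔ m v ∉ V1) ∧
      ∀ w : V, G.Adj v w → (v ∈ V1 ↔ w ∉ V1) → w = m v)
    (F : Set V) (hF : F ⊆ V1)
    (h2conn : TwoConnected (G.induce F)) (hF3 : 3 ≤ Nat.card F) :
    IsEmpty (pathGraph 3 ↪g G.induce (m '' F)) := by
  constructor
  intro e
  classical
  -- basic facts about the matching
  have hmAdj : ∀ v, G.Adj v (m v) := fun v => (hm v).1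
  have hmV : ∀ v, (v ∈ V1 ↔ m v ∉ V1) := fun v => (hm v).2.1
  have hmU : ∀ v w, G.Adj v w → (v ∈ V1 ↔ w ∉ V1) → w = m v := fun v => (hm v).2.2
  have hinv : ∀ v, v ∈ V1 → m (m v) = v := by
    intro v hv
    have h1 : m v ∉ V1 := (hmV v).1 hv
    exact (hmU (m v) v (hmAdj v).symm (iff_of_false h1 (not_not_intro hv))).symm
  have honly : ∀ v, v ∈ F → ∀ u, u ∈ F → G.Adj (m v) u → u = v := by
    intro v hv u hu hadj
    have h1 : m v ∉ V1 := (hmV v).1 (hF hv)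
    have h2 := hmU (m v) u hadj (iff_of_false h1 (not_not_intro (hF hu)))
    rw [h2, hinv v (hF hv)]
  -- the P3 vertices
  have h01 : (pathGraph 3).Adj 0 1 := by rw [pathGraph_adj]; decide
  have h12 : (pathGraph 3).Adj 1 2 := by rw [pathGraph_adj]; decide
  have h02 : ¬ (pathGraph 3).Adj 0 2 := by rw [pathGraph_adj]; decide
  have hAB : G.Adj ↑(e 0) ↑(e 1) := by
    have := e.map_rel_iff.mpr h01
    simpa using this
  have hBC : G.Adj ↑(e 1) ↑(e 2) := by
    have := e.map_rel_iff.mpr h12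
    simpa using this
  have hAC : ¬ G.Adj ↑(e 0) ↑(e 2) := by
    intro h
    exact h02 (e.map_rel_iff.mp (by simpa using h))
  have hACne : (↑(e 0) : V) ≠ ↑(e 2) := by
    intro h
    have : (e 0) = (e 2) := Subtype.ext h
    have := e.injective this
    simp at this
  obtain ⟨x, hxF, hxa⟩ := (e 0).2
  obtain ⟨y, hyF, hyb⟩ := (e 1).2
  obtain ⟨z, hzF, hzc⟩ := (e 2).2
  have hxz : x ≠ z := by
    intro h; exact hACne (by rw [← hxa, ← hzc, h])
  have hxy : x ≠ y := by
    intro h; exact hAB.ne (by rw [← hxa, ← hyb, h])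
  have hzy : z ≠ y := by
    intro h; exact hBC.ne' (by rw [← hyb, ← hzc, h])
  have honlyA : ∀ u, u ∈ F → G.Adj ↑(e 0) u → u = x := by
    intro u hu hadj
    exact honly x hxF u hu (by rwa [hxa])
  have honlyB : ∀ u, u ∈ F → G.Adj ↑(e 1) u → u = y := by
    intro u hu hadj
    exact honly y hyF u hu (by rwa [hyb])
  have honlyC : ∀ u, u ∈ F → G.Adj ↑(e 2) u → u = z := by
    intro u hu hadj
    exact honly z hzF u hu (by rwa [hzc])
  have hAV1 : (↑(e 0) : V) ∉ V1 := by rw [← hxa]; exact (hmV x).1 (hF hxF)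
  have hBV1 : (↑(e 1) : V) ∉ V1 := by rw [← hyb]; exact (hmV y).1 (hF hyF)
  have hCV1 : (↑(e 2) : V) ∉ V1 := by rw [← hzc]; exact (hmV z).1 (hF hzF)
  -- 2-connectivity gives reachability avoiding y
  obtain ⟨hconn, hcard, hdel⟩ := h2conn
  set S : Set V := {v | v ∈ F ∧ v ≠ y} with hS
  have hxS : x ∈ S := ⟨hxF, hxy⟩
  have hzS : z ∈ S := ⟨hzF, hzy⟩
  have hreach : (G.induce S).Reachable ⟨x, hxS⟩ ⟨z, hzS⟩ := by
    have hc := hdel ⟨y, hyF⟩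
    have hx2 : (⟨x, hxF⟩ : F) ∈ ({(⟨y, hyF⟩ : F)}ᶜ : Set F) := by
      simp only [Set.mem_compl_iff, Set.mem_singleton_iff]
      intro h
      exact hxy (congrArg Subtype.val h)
    have hz2 : (⟨z, hzF⟩ : F) ∈ ({(⟨y, hyF⟩ : F)}ᶜ : Set F) := by
      simp only [Set.mem_compl_iff, Set.mem_singleton_iff]
      intro h
      exact hzy (congrArg Subtype.val h)
    have hr := hc.preconnected ⟨⟨x, hxF⟩, hx2⟩ ⟨⟨z, hzF⟩, hz2⟩
    let φ : ((G.induce F).induce ({(⟨y, hyF⟩ : F)}ᶜ : Set F)) →g (G.induce S) :=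
      ⟨fun w => ⟨(w.1 : V), ⟨w.1.2, fun h => w.2 (Subtype.ext h)⟩⟩, fun {a b} h => h⟩
    exact hr.map φ
  obtain ⟨p, hp⟩ := hreach.exists_walk_length_eq_dist
  set d := (G.induce S).dist ⟨x, hxS⟩ ⟨z, hzS⟩ with hd
  have hd1 : 1 ≤ d := by
    rcases Nat.eq_zero_or_pos d with h | h
    · exfalso
      have : p.length = 0 := by omega
      exact hxz (congrArg Subtype.val (Walk.eq_of_length_eq_zero this))
    · exact h
  have hmin : ∀ q : (G.induce S).Walk ⟨x, hxS⟩ ⟨z, hzS⟩, d ≤ q.length := fun q => dist_le q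
  have hpadj : ∀ i, i < d → (G.induce S).Adj (p.getVert i) (p.getVert (i + 1)) := by
    intro i hi
    exact p.adj_getVert_succ (by omega)
  have hpne : ∀ i j, i < j → j ≤ d → p.getVert i ≠ p.getVert j := by
    intro i j hij hj heq
    obtain ⟨q, hq⟩ := my_walk_prefix p i
    obtain ⟨r, hr⟩ := my_walk_suffix p j
    have := hmin (q.append (r.copy heq.symm rfl))
    rw [Walk.length_append, Walk.length_copy] at this
    omega
  have hchord : ∀ i j, i + 1 < j → j ≤ d → ¬ (G.induce S).Adj (p.getVert i) (p.getVert j) := by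
    intro i j hij hj hadj
    obtain ⟨q, hq⟩ := my_walk_prefix p i
    obtain ⟨r, hr⟩ := my_walk_suffix p j
    have := hmin (q.append (Walk.cons hadj r))
    rw [Walk.length_append, Walk.length_cons] at this
    omega
  -- the cycle vertices
  set g : ℕ → V := fun i =>
    if i ≤ d then ↑(p.getVert i) else if i = d + 1 then ↑(e 2) else if i = d + 2 then ↑(e 1) else ↑(e 0)
    with hg
  have hgpath : ∀ i, i ≤ d → g i = ↑(p.getVert i) := by
    intro i hi; simp [hg, hi]
  have hgS : ∀ i, i ≤ d → g i ∈ S := by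
    intro i hi; rw [hgpath i hi]; exact (p.getVert i).2
  have hg0 : g 0 = x := by rw [hgpath 0 (by omega)]; rw [p.getVert_zero]
  have hgd : g d = z := by
    rw [hgpath d le_rfl]
    rw [p.getVert_of_length_le (by omega)]
  have hgc : g (d + 1) = ↑(e 2) := by simp [hg]
  have hgb : g (d + 2) = ↑(e 1) := by simp [hg]
  have hga : g (d + 3) = ↑(e 0) := by simp [hg]
  -- G-level facts about the path
  have hGadj : ∀ i, i < d → G.Adj (g i) (g (i + 1)) := by
    intro i hi
    rw [hgpath i (by omega), hgpath (i + 1) (by omega)]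
    exact (hpadj i hi)
  have hGchord : ∀ i j, i + 1 < j → j ≤ d → ¬ G.Adj (g i) (g j) := by
    intro i j hij hj hadj
    rw [hgpath i (by omega), hgpath j hj] at hadj
    exact hchord i j hij hj hadj
  have hGne : ∀ i j, i < j → j ≤ d → g i ≠ g j := by
    intro i j hij hj heq
    rw [hgpath i (by omega), hgpath j hj] at heq
    exact hpne i j hij hj (Subtype.ext heq)
  -- adjacency of path vertices to a, b, c
  have hadjA : ∀ i, i ≤ d → (G.Adj (g i) ↑(e 0) ↔ i = 0) := by
    intro i hi
    constructor
    · intro h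
      have := honlyA (g i) (hgS i hi).1 h.symm
      rcases Nat.eq_zero_or_pos i with h0 | h0
      · exact h0
      · exfalso; exact hGne 0 i h0 hi (by rw [hg0, this])
    · intro h; subst h; rw [hg0, ← hxa]; exact hmAdj x
  have hadjB : ∀ i, i ≤ d → ¬ G.Adj (g i) ↑(e 1) := by
    intro i hi h
    exact (hgS i hi).2 (honlyB (g i) (hgS i hi).1 h.symm)
  have hadjC : ∀ i, i ≤ d → (G.Adj (g i) ↑(e 2) ↔ i = d) := by
    intro i hi
    constructor
    · intro h
      have := honlyC (g i) (hgS i hi).1 h.symm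
      rcases Nat.lt_or_ge i d with h0 | h0
      · exfalso; exact hGne i d h0 le_rfl (by rw [hgd, this])
      · omega
    · intro h; subst h; rw [hgd, ← hzc]; exact hmAdj z
  -- build the cycle
  have hcyc : Nonempty (cycleGraph (d + 4) ↪g G) := by
    apply my_cycle_embed G (d + 4) (by omega) g
    · intro i j hij hjN
      have hdN : d + 4 - 1 = d + 3 := by omega
      rw [hdN]
      rcases Nat.lt_or_ge j (d + 1) with hj | hj
      · -- j ≤ d : path vertices
        have hj' : j ≤ d := by omega
        constructor
        · intro h
          by_contra hcon
          push_neg at hcon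
          have h1 : i + 1 < j := by
            rcases Nat.lt_or_ge (i + 1) j with h' | h'
            · exact h'
            · exfalso; exact hcon.1 (by omega)
          exact hGchord i j h1 hj' h
        · rintro (h | ⟨h0, h3⟩)
          · subst h; exact hGadj i (by omega)
          · omega
      · rcases Nat.lt_or_ge j (d + 2) with hj2 | hj2
        · -- j = d + 1 : vertex c
          have hj' : j = d + 1 := by omega
          subst hj'
          have hi' : i ≤ d := by omega
          rw [hgc, hadjC i hi']
          omega
        · rcases Nat.lt_or_ge j (d + 3) with hj3 | hj3
          · -- j = d + 2 : vertex b
            have hj' : j = d + 2 := by omega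
            subst hj'
            rw [hgb]
            rcases Nat.lt_or_ge i (d + 1) with hi | hi
            · have hi' : i ≤ d := by omega
              constructor
              · intro h; exact absurd h (hadjB i hi')
              · intro h; omega
            · have hi' : i = d + 1 := by omega
              subst hi'
              rw [hgc]
              constructor
              · intro _; left; rfl
              · intro _; exact hBC.symm
          · -- j = d + 3 : vertex a
            have hj' : j = d + 3 := by omega
            subst hj'
            rw [hga]
            rcases Nat.lt_or_ge i (d + 1) with hi | hi
            · have hi' : i ≤ d := by omega
              rw [hadjA i hi']
              omega
            · rcases Nat.lt_or_ge i (d + 2) with hi2 | hi2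
              · have hi' : i = d + 1 := by omega
                subst hi'
                rw [hgc]
                constructor
                · intro h; exact absurd h.symm hAC
                · intro h; omega
              · have hi' : i = d + 2 := by omega
                subst hi'
                rw [hgb]
                constructor
                · intro _; left; rfl
                · intro _; exact hAB.symm
    · -- injectivity
      intro i j hij hjN heq
      rcases Nat.lt_or_ge j (d + 1) with hj | hj
      · exact hGne i j hij (by omega) heq
      · rcases Nat.lt_or_ge i (d + 1) with hi | hi
        · -- i path vertex, j in {a,b,c}
          have hiV1 : g i ∈ V1 := hF (hgS i (by omega)).1
          rcases Nat.lt_or_ge j (d + 2) with hj2 | hj2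
          · have : j = d + 1 := by omega
            subst this; rw [hgc] at heq; exact hCV1 (heq ▸ hiV1)
          · rcases Nat.lt_or_ge j (d + 3) with hj3 | hj3
            · have : j = d + 2 := by omega
              subst this; rw [hgb] at heq; exact hBV1 (heq ▸ hiV1)
            · have : j = d + 3 := by omega
              subst this; rw [hga] at heq; exact hAV1 (heq ▸ hiV1)
        · -- both in {a,b,c}
          rcases Nat.lt_or_ge j (d + 3) with hj3 | hj3
          · have hi' : i = d + 1 := by omega
            have hj' : j = d + 2 := by omega
            subst hi'; subst hj'
            rw [hgc, hgb] at heq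
            exact hBC.ne heq.symm
          · have hj' : j = d + 3 := by omega
            subst hj'
            rcases Nat.lt_or_ge i (d + 2) with hi2 | hi2
            · have hi' : i = d + 1 := by omega
              subst hi'
              rw [hgc, hga] at heq
              exact hACne heq.symm
            · have hi' : i = d + 2 := by omega
              subst hi'
              rw [hgb, hga] at heq
              exact hAB.ne heq.symm
  exact (hhole (d + 4) (by omega)).false hcyc.some
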